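/- Let L = ℤ^μ be the root lattice of a symmetric generalized Cartan matrix A = (a_{ij}) associated to a connected graph (a_{ii} = 2, a_{ij} = a_{ji} ≤ 0 for i ≠ j), with bilinear form I(α_i, α_j) = a_{ij}. Let K = {λ ∈ L⁺∖{0} : λ has connected support and I(λ, α_i) ≤ 0 for all i}. Then for any λ ∈ K and any w in the Weyl group W, w(λ) ∈ L⁺, i.e., the set of positive imaginary roots Δ⁺_im = W(K) is contained in L⁺ = Σᵢ ℤ≥0 α_i. -/

import Mathlib

namespace Stmt9Aux

variable {μ : ℕ}

def piw (r : Fin μ → (Fin μ → ℤ) → (Fin μ → ℤ)) (l : List (Fin μ)) :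
    (Fin μ → ℤ) → (Fin μ → ℤ) := fun v => l.foldr r v

noncomputable def wlen (r : Fin μ → (Fin μ → ℤ) → (Fin μ → ℤ))
    (f : (Fin μ → ℤ) → (Fin μ → ℤ)) : ℕ :=
  sInf {n | ∃ l : List (Fin μ), l.length = n ∧ piw r l = f}

variable (r : Fin μ → (Fin μ → ℤ) → (Fin μ → ℤ))

lemma piw_nil : piw r [] = id := rfl

lemma piw_single (x : Fin μ) : piw r [x] = r x := rfl

lemma piw_append (l₁ l₂ : List (Fin μ)) :
    piw r (l₁ ++ l₂) = piw r l₁ ∘ piw r l₂ := by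
  funext v; simp [piw, List.foldr_append]

lemma piw_concat_cancel (hinv : ∀ i v, r i (r i v) = v) (l : List (Fin μ)) (x : Fin μ) :
    piw r (l ++ [x]) ∘ r x = piw r l := by
  funext v; simp [piw, List.foldr_append, Function.comp, hinv]

lemma wlen_le {f} (l : List (Fin μ)) (h : piw r l = f) : wlen r f ≤ l.length :=
  Nat.sInf_le ⟨l, rfl, h⟩

lemma wlen_spec {f} (hf : ∃ l, piw r l = f) :
    ∃ l : List (Fin μ), l.length = wlen r f ∧ piw r l = f := by
  obtain ⟨l, hl⟩ := hf
  have h : wlen r f ∈ {n | ∃ l : List (Fin μ), l.length = n ∧ piw r l = f} :=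
    Nat.sInf_mem ⟨l.length, l, rfl, hl⟩
  exact h

lemma wlen_comp_le {f} (hf : ∃ l, piw r l = f) (m : List (Fin μ)) :
    wlen r (f ∘ piw r m) ≤ wlen r f + m.length := by
  obtain ⟨l, hl, hlf⟩ := wlen_spec r hf
  have h : piw r (l ++ m) = f ∘ piw r m := by rw [piw_append, hlf]
  simpa [hl] using wlen_le r (l ++ m) h

lemma eq_id_of_wlen_eq_zero {f} (hf : ∃ l, piw r l = f) (h : wlen r f = 0) : f = id := by
  obtain ⟨l, hl, hlf⟩ := wlen_spec r hf
  rw [h, List.length_eq_zero_iff] at hl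
  rw [← hlf, hl]; rfl

lemma piwlin (hlin : ∀ (i : Fin μ) (c d : ℤ) (x y : Fin μ → ℤ), r i (c • x + d • y) = c • r i x + d • r i y) :
    ∀ (l : List (Fin μ)) (c d : ℤ) (x y : Fin μ → ℤ),
      piw r l (c • x + d • y) = c • piw r l x + d • piw r l y := by
  intro l
  induction l with
  | nil => intro c d x y; rfl
  | cons i l ih =>
    intro c d x y
    show r i (piw r l (c • x + d • y)) = _
    rw [ih, hlin]
    rfl

lemma chain_or_dup {α : Type*} : ∀ m : List α, List.Chain' (· ≠ ·) m ∨
    ∃ (m₁ : List α) (x : α) (m₂ : List α), m = m₁ ++ x :: x :: m₂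
  | [] => Or.inl List.isChain_nil
  | [x] => Or.inl (List.isChain_singleton x)
  | x :: y :: rest => by
    by_cases hxy : x = y
    · exact Or.inr ⟨[], x, rest, by subst hxy; rfl⟩
    · rcases chain_or_dup (y :: rest) with hc | ⟨m₁, z, m₂, he⟩
      · exact Or.inl (List.isChain_cons_cons.mpr ⟨hxy, hc⟩)
      · exact Or.inr ⟨x :: m₁, z, m₂, by rw [List.cons_append, ← he]⟩

lemma pair_split {s t x y : Fin μ} (hx : x = s ∨ x = t) (hy : y = s ∨ y = t) (hxy : x ≠ y) :
    (x = s ∧ y = t) ∨ (x = t ∧ y = s) := by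
  rcases hx with rfl | rfl <;> rcases hy with rfl | rfl <;> tauto

lemma grow (s t : Fin μ) (hst : s ≠ t) (a : ℤ) (ha2 : a ≤ -2)
    (hrs : ∀ c d : ℤ, r s (c • Pi.single s 1 + d • Pi.single t 1)
        = (-c - a * d) • Pi.single s 1 + d • Pi.single t 1)
    (hrt : ∀ c d : ℤ, r t (c • Pi.single s 1 + d • Pi.single t 1)
        = c • Pi.single s 1 + (-d - a * c) • Pi.single t 1) :
    ∀ (n : ℕ) (m : List (Fin μ)), m.length ≤ n → (∀ x ∈ m, x = s ∨ x = t) →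
      List.Chain' (· ≠ ·) m → m.getLast? = some t →
      ∃ c d : ℤ, 0 ≤ c ∧ 0 ≤ d ∧
        piw r m (Pi.single s 1) = c • Pi.single s 1 + d • Pi.single t 1 ∧
        (∀ l', m = s :: l' → d ≤ c) ∧ (∀ l', m = t :: l' → c ≤ d) := by
  have hes : (Pi.single s 1 : Fin μ → ℤ) = (1:ℤ) • Pi.single s 1 + (0:ℤ) • Pi.single t 1 := by
    simp
  intro n
  induction n with
  | zero =>
    intro m hlen _ _ hlast
    rw [List.length_eq_zero_iff.mp (Nat.le_zero.mp hlen)] at hlast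
    simp at hlast
  | succ n ih =>
    intro m hlen hmem hchain hlast
    match m with
    | [] => simp at hlast
    | [x] =>
      have hx : x = t := by simpa using hlast
      obtain rfl := hx.symm
      have heq : piw r [t] (Pi.single s 1)
          = (1:ℤ) • Pi.single s 1 + (-0 - a * 1) • Pi.single t 1 := by
        show r t (Pi.single s 1) = _
        conv_lhs => rw [hes]
        exact hrt 1 0
      refine ⟨1, -0 - a * 1, zero_le_one, by linarith, heq, ?_, ?_⟩
      · intro l' hl'
        exact absurd (List.cons.inj hl').1.symm hst
      · intro l' _
        linarith
    | x :: y :: rest =>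
      have hxy : x ≠ y := (List.isChain_cons_cons.mp hchain).1
      have hchain' : List.Chain' (· ≠ ·) (y :: rest) := (List.isChain_cons_cons.mp hchain).2
      have hlast' : (y :: rest).getLast? = some t := by
        rw [← hlast]; exact (List.getLast?_cons_cons).symm
      have hlen' : (y :: rest).length ≤ n := by simp at hlen ⊢; omega
      obtain ⟨c, d, hc, hd, heq, hhs, hht⟩ := ih (y :: rest) hlen'
        (fun z hz => hmem z (List.mem_cons_of_mem _ hz)) hchain' hlast'
      rcases pair_split (hmem x (by simp)) (hmem y (by simp [List.mem_cons])) hxy with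
        ⟨hx1, hy1⟩ | ⟨hx1, hy1⟩
      · -- x = s, y = t
        obtain rfl := hx1.symm; obtain rfl := hy1.symm
        have hcd : c ≤ d := hht rest rfl
        have key : 0 ≤ (-a - 2) * d := mul_nonneg (by linarith) hd
        have heq2 : piw r (s :: t :: rest) (Pi.single s 1)
            = (-c - a * d) • Pi.single s 1 + d • Pi.single t 1 := by
          show r s (piw r (t :: rest) (Pi.single s 1)) = _
          rw [heq]; exact hrs c d
        refine ⟨-c - a * d, d, by nlinarith, hd, heq2, ?_, ?_⟩
        · intro l' _; nlinarith
        · intro l' hl'; exact absurd (List.cons.inj hl').1 hst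
      · -- x = t, y = s
        obtain rfl := hx1.symm; obtain rfl := hy1.symm
        have hcd : d ≤ c := hhs rest rfl
        have key : 0 ≤ (-a - 2) * c := mul_nonneg (by linarith) hc
        have heq2 : piw r (t :: s :: rest) (Pi.single s 1)
            = c • Pi.single s 1 + (-d - a * c) • Pi.single t 1 := by
          show r t (piw r (s :: rest) (Pi.single s 1)) = _
          rw [heq]; exact hrt c d
        refine ⟨c, -d - a * c, hc, by nlinarith, heq2, ?_, ?_⟩
        · intro l' hl'; exact absurd (List.cons.inj hl').1.symm hst
        · intro l' _; nlinarith

lemma pair_eq {s t x y z : Fin μ} (hx : x = s ∨ x = t) (hy : y = s ∨ y = t)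
    (hz : z = s ∨ z = t) (hxy : x ≠ y) (hzy : z ≠ y) : z = x := by
  rcases hx with rfl | rfl <;> rcases hy with rfl | rfl <;> rcases hz with rfl | rfl <;> tauto

lemma r2l (hinv : ∀ (i : Fin μ) (v : Fin μ → ℤ), r i (r i v) = v)
    (s t : Fin μ) (hst : s ≠ t) (a : ℤ) (ha : a ≤ 0)
    (hrs : ∀ c d : ℤ, r s (c • Pi.single s 1 + d • Pi.single t 1)
        = (-c - a * d) • Pi.single s 1 + d • Pi.single t 1)
    (hrt : ∀ c d : ℤ, r t (c • Pi.single s 1 + d • Pi.single t 1)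
        = c • Pi.single s 1 + (-d - a * c) • Pi.single t 1)
    (hcomm : a = 0 → ∀ v, r s (r t v) = r t (r s v))
    (hbraid : a = -1 → ∀ v, r s (r t (r s v)) = r t (r s (r t v))) :
    ∀ (n : ℕ) (m : List (Fin μ)), m.length ≤ n → (∀ x ∈ m, x = s ∨ x = t) →
      (∃ c d : ℤ, 0 ≤ c ∧ 0 ≤ d ∧
        piw r m (Pi.single s 1) = c • Pi.single s 1 + d • Pi.single t 1) ∨
      (∃ m' : List (Fin μ), m'.length < m.length ∧ piw r m' = piw r m ∘ r s) := by
  have hes : (Pi.single s 1 : Fin μ → ℤ) = (1:ℤ) • Pi.single s 1 + (0:ℤ) • Pi.single t 1 := by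
    simp
  intro n
  induction n with
  | zero =>
    intro m hlen _
    rw [List.length_eq_zero_iff.mp (Nat.le_zero.mp hlen)]
    exact Or.inl ⟨1, 0, zero_le_one, le_refl 0, by rw [← hes]; rfl⟩
  | succ n ih =>
    intro m hlen hmem
    rcases chain_or_dup m with hchain | ⟨m₁, x, m₂, rfl⟩
    · -- alternating word
      rcases List.eq_nil_or_concat m with rfl | ⟨m₀, x, rfl⟩
      · exact Or.inl ⟨1, 0, zero_le_one, le_refl 0, by rw [← hes]; rfl⟩
      · rw [List.concat_eq_append] at *
        rcases hmem x (by simp) with hx | hx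
        · -- last letter is s : shorten
          obtain rfl := hx.symm
          right
          refine ⟨m₀, by simp, ?_⟩
          funext u
          exact (congrFun (piw_concat_cancel r hinv m₀ s) u).symm
        · -- last letter is t
          obtain rfl := hx.symm
          by_cases ha2 : a ≤ -2
          · left
            obtain ⟨c, d, hc, hd, heq, -, -⟩ := grow r s t hst a ha2 hrs hrt
              (m₀ ++ [t]).length (m₀ ++ [t]) le_rfl hmem hchain (by simp)
            exact ⟨c, d, hc, hd, heq⟩
          · have ha01 : a = 0 ∨ a = -1 := by omega
            match m₀ with
            | [] =>
              left
              refine ⟨1, -0 - a * 1, zero_le_one, by linarith, ?_⟩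
              show r t (Pi.single s 1) = _
              conv_lhs => rw [hes]
              exact hrt 1 0
            | [y] =>
              have hy : y = s := by
                rcases hmem y (by simp) with h | h
                · exact h
                · exact absurd h ((List.isChain_cons_cons.mp hchain).1)
              obtain rfl := hy.symm
              rcases ha01 with ha0 | ha1
              · -- a = 0 : m' = [t]
                right
                refine ⟨[t], by simp, ?_⟩
                funext u
                show r t u = r s (r t (r s u))
                have h2 := hcomm ha0 (r s u)
                rw [hinv] at h2
                exact h2.symm
              · -- a = -1 : positive
                left
                refine ⟨-1 - a * (-0 - a * 1), -0 - a * 1, by rw [ha1]; norm_num,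
                  by rw [ha1]; norm_num, ?_⟩
                show r s (r t (Pi.single s 1)) = _
                conv_lhs => rw [hes]
                rw [hrt 1 0]
                exact hrs 1 (-0 - a * 1)
            | [z, y] =>
              have hy : y = s := by
                rcases hmem y (by simp) with h | h
                · exact h
                · exact absurd h (List.isChain_cons_cons.mp (List.isChain_cons_cons.mp hchain).2).1
              have hz : z = t := by
                rcases hmem z (by simp) with h | h
                · rw [hy] at hchain
                  exact absurd (h.trans rfl) (by
                    have := (List.isChain_cons_cons.mp hchain).1
                    intro hzs; rw [hzs] at this; exact this rfl)
                · exact h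
              obtain rfl := hy.symm
              obtain rfl := hz.symm
              rcases ha01 with ha0 | ha1
              · -- a = 0 : m' = []
                right
                refine ⟨[], by simp, ?_⟩
                funext u
                show u = r t (r s (r t (r s u)))
                have h2 := hcomm ha0 (r s u)
                rw [hinv] at h2
                rw [h2, hinv]
              · -- a = -1 : m' = [s, t]
                right
                refine ⟨[s, t], by simp, ?_⟩
                funext u
                show r s (r t u) = r t (r s (r t (r s u)))
                have h3 := hbraid ha1 (r s u)
                rw [hinv] at h3
                exact h3
            | z1 :: z2 :: z3 :: zs =>
              obtain ⟨w4, rest', hzsplit⟩ : ∃ w4 rest', zs ++ [t] = w4 :: rest' := by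
                cases zs with
                | nil => exact ⟨t, [], rfl⟩
                | cons v vs => exact ⟨v, vs ++ [t], rfl⟩
              rw [List.cons_append, List.cons_append, List.cons_append, hzsplit]
                at hchain hmem hlen ⊢
              simp only [List.Chain', List.isChain_cons_cons] at hchain
              obtain ⟨h12, h23, h34, hch⟩ := hchain
              have h1 := hmem z1 (by simp)
              have h2 := hmem z2 (by simp)
              have h3 := hmem z3 (by simp)
              have h4 := hmem w4 (by simp)
              have hz3 : z3 = z1 := pair_eq h1 h2 h3 h12 (Ne.symm h23)
              have hw4 : w4 = z2 := pair_eq h2 h3 h4 h23 (Ne.symm h34)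
              have hlen' : rest'.length + 4 ≤ n + 1 := by
                simp at hlen; omega
              have hmemr : ∀ z ∈ rest', z = s ∨ z = t := fun z hz =>
                hmem z (by simp [hz])
              rcases ha01 with ha0 | ha1
              · -- a = 0 : strip the first four letters
                have hcommg : ∀ u, r z1 (r z2 u) = r z2 (r z1 u) := by
                  rcases pair_split h1 h2 h12 with ⟨e1, e2⟩ | ⟨e1, e2⟩ <;> rw [e1, e2]
                  · exact hcomm ha0
                  · exact fun u => (hcomm ha0 u).symm
                have hfun : piw r (z1 :: z2 :: z3 :: w4 :: rest') = piw r rest' := by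
                  funext u
                  show r z1 (r z2 (r z3 (r w4 (piw r rest' u)))) = piw r rest' u
                  rw [hz3, hw4, hcommg, hinv, hinv]
                rcases ih rest' (by omega) hmemr with ⟨c, d, hc, hd, heq⟩ | ⟨m', hm', heq⟩
                · exact Or.inl ⟨c, d, hc, hd, by rw [hfun]; exact heq⟩
                · refine Or.inr ⟨m', by simp; omega, by rw [hfun]; exact heq⟩
              · -- a = -1 : use the braid relation
                have hbraidg : ∀ u, r z1 (r z2 (r z1 u)) = r z2 (r z1 (r z2 u)) := by
                  rcases pair_split h1 h2 h12 with ⟨e1, e2⟩ | ⟨e1, e2⟩ <;> rw [e1, e2]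
                  · exact hbraid ha1
                  · exact fun u => (hbraid ha1 u).symm
                have hfun : piw r (z1 :: z2 :: z3 :: w4 :: rest')
                    = piw r (z2 :: z1 :: rest') := by
                  funext u
                  show r z1 (r z2 (r z3 (r w4 (piw r rest' u))))
                      = r z2 (r z1 (piw r rest' u))
                  rw [hz3, hw4, hbraidg, hinv]
                have hlen'' : (z2 :: z1 :: rest').length ≤ n := by simp; omega
                have hmem'' : ∀ z ∈ z2 :: z1 :: rest', z = s ∨ z = t := by
                  intro z hz
                  rcases List.mem_cons.mp hz with rfl | hz'
                  · exact h2
                  · rcases List.mem_cons.mp hz' with rfl | hz''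
                    · exact h1
                    · exact hmemr z hz''
                rcases ih _ hlen'' hmem'' with ⟨c, d, hc, hd, heq⟩ | ⟨m', hm', heq⟩
                · exact Or.inl ⟨c, d, hc, hd, by rw [hfun]; exact heq⟩
                · refine Or.inr ⟨m', by simp at hm' ⊢; omega, by rw [hfun]; exact heq⟩
    · -- adjacent duplicate : cancel
      have hpiw : piw r (m₁ ++ x :: x :: m₂) = piw r (m₁ ++ m₂) := by
        funext v
        simp [piw, List.foldr_append, hinv]
      have hlen2 : (m₁ ++ m₂).length ≤ n := by
        simp only [List.length_append, List.length_cons] at hlen ⊢; omega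
      have hmem2 : ∀ z ∈ m₁ ++ m₂, z = s ∨ z = t := by
        intro z hz
        apply hmem z
        simp only [List.mem_append, List.mem_cons] at hz ⊢
        tauto
      rcases ih (m₁ ++ m₂) hlen2 hmem2 with ⟨c, d, hc, hd, heq⟩ | ⟨m', hm', heq⟩
      · exact Or.inl ⟨c, d, hc, hd, by rw [hpiw]; exact heq⟩
      · refine Or.inr ⟨m', ?_, by rw [hpiw]; exact heq⟩
        simp only [List.length_append, List.length_cons] at hm' ⊢
        omega

lemma loop (hinv : ∀ (i : Fin μ) (v : Fin μ → ℤ), r i (r i v) = v) :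
    ∀ (n : ℕ) (w : (Fin μ → ℤ) → (Fin μ → ℤ)), (∃ l, piw r l = w) → wlen r w ≤ n →
      ∀ s t : Fin μ, (∃ x, (x = s ∨ x = t) ∧ wlen r (w ∘ r x) < wlen r w) →
      ∃ (v : (Fin μ → ℤ) → (Fin μ → ℤ)) (m : List (Fin μ)), (∃ l, piw r l = v) ∧ (∀ x ∈ m, x = s ∨ x = t) ∧
        w = v ∘ piw r m ∧ 1 ≤ m.length ∧ wlen r v + m.length ≤ wlen r w ∧
        ¬ wlen r (v ∘ r s) < wlen r v ∧ ¬ wlen r (v ∘ r t) < wlen r v := by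
  intro n
  induction n with
  | zero =>
    rintro w _ hn s t ⟨x, _, hlt⟩
    omega
  | succ n ih =>
    rintro w hw hn s t ⟨x, hx, hlt⟩
    have hw1rep : ∃ l, piw r l = w ∘ r x := by
      obtain ⟨l, hl⟩ := hw
      exact ⟨l ++ [x], by rw [piw_append, hl, piw_single]⟩
    have hww1 : w = (w ∘ r x) ∘ r x := by
      funext u
      show w u = w (r x (r x u))
      rw [hinv]
    by_cases hdesc : ∃ y, (y = s ∨ y = t) ∧ wlen r ((w ∘ r x) ∘ r y) < wlen r (w ∘ r x)
    · obtain ⟨v, m, hv, hmm, hvm, hm1, hsum, hns, hnt⟩ :=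
        ih (w ∘ r x) hw1rep (by omega) s t hdesc
      refine ⟨v, m ++ [x], hv, ?_, ?_, by simp, ?_, hns, hnt⟩
      · intro z hz
        rcases List.mem_append.mp hz with h | h
        · exact hmm z h
        · rw [List.mem_singleton.mp h]; exact hx
      · rw [hww1, hvm, piw_append, piw_single]
        rfl
      · simp only [List.length_append, List.length_singleton]
        omega
    · push_neg at hdesc
      refine ⟨w ∘ r x, [x], hw1rep, by simpa using hx, ?_, le_rfl, by simpa using hlt, ?_, ?_⟩
      · rw [piw_single]; exact hww1
      · exact not_lt.mpr (hdesc s (Or.inl rfl))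
      · exact not_lt.mpr (hdesc t (Or.inr rfl))

lemma fund (hinv : ∀ (i : Fin μ) (v : Fin μ → ℤ), r i (r i v) = v)
    (hlin : ∀ (i : Fin μ) (c d : ℤ) (x y : Fin μ → ℤ),
      r i (c • x + d • y) = c • r i x + d • r i y)
    (hR2 : ∀ s t : Fin μ, s ≠ t → ∀ m : List (Fin μ), (∀ x ∈ m, x = s ∨ x = t) →
      (∃ c d : ℤ, 0 ≤ c ∧ 0 ≤ d ∧
        piw r m (Pi.single s 1) = c • Pi.single s 1 + d • Pi.single t 1) ∨
      (∃ m' : List (Fin μ), m'.length < m.length ∧ piw r m' = piw r m ∘ r s)) :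
    ∀ (n : ℕ) (w : (Fin μ → ℤ) → (Fin μ → ℤ)), (∃ l, piw r l = w) → wlen r w ≤ n →
      ∀ s : Fin μ, ¬ wlen r (w ∘ r s) < wlen r w → ∀ k, 0 ≤ w (Pi.single s 1) k := by
  intro n
  induction n with
  | zero =>
    intro w hw h0 s _ k
    rw [eq_id_of_wlen_eq_zero r hw (Nat.le_zero.mp h0)]
    simp only [id_eq]
    rw [Pi.single_apply]
    split <;> norm_num
  | succ n ih =>
    intro w hw hn s hs k
    by_cases h0 : wlen r w = 0
    · rw [eq_id_of_wlen_eq_zero r hw h0]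
      simp only [id_eq]
      rw [Pi.single_apply]
      split <;> norm_num
    · obtain ⟨l, hl, hlw⟩ := wlen_spec r hw
      have hlne : l ≠ [] := by
        intro h
        rw [h] at hl
        simp at hl
        omega
      obtain ⟨l₀, x, hlx⟩ := (List.eq_nil_or_concat l).resolve_left hlne
      rw [List.concat_eq_append] at hlx
      have hcan : piw r l₀ = w ∘ r x := by
        rw [← hlw, hlx]
        exact (piw_concat_cancel r hinv l₀ x).symm
      have hdesc : wlen r (w ∘ r x) < wlen r w := by
        have h1 : wlen r (w ∘ r x) ≤ l₀.length := wlen_le r l₀ hcan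
        have h2 : l₀.length + 1 = wlen r w := by
          rw [← hl, hlx]; simp
        omega
      have hxs : x ≠ s := by
        intro h
        rw [h] at hdesc
        exact hs hdesc
      obtain ⟨v, m, hvrep, hmmem, hwvm, hm1, hml, hvs, hvt⟩ :=
        loop r hinv (n + 1) w hw hn s x ⟨x, Or.inr rfl, hdesc⟩
      have hvlt : wlen r v ≤ n := by omega
      have hmmem' : ∀ z ∈ m, z = s ∨ z = x := hmmem
      rcases hR2 s x (Ne.symm hxs) m hmmem' with ⟨c, d, hc, hd, heq⟩ | ⟨m', hm', hpm'⟩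
      · obtain ⟨lv, hlv⟩ := hvrep
        have hlinv : v (c • Pi.single s 1 + d • Pi.single x 1)
            = c • v (Pi.single s 1) + d • v (Pi.single x 1) := by
          rw [← hlv]
          exact piwlin r hlin lv c d _ _
        have h1 : 0 ≤ v (Pi.single s 1) k := ih v ⟨lv, hlv⟩ hvlt s hvs k
        have h2 : 0 ≤ v (Pi.single x 1) k := ih v ⟨lv, hlv⟩ hvlt x hvt k
        have hws : w (Pi.single s 1) = v (piw r m (Pi.single s 1)) := by rw [hwvm]; rfl
        rw [hws, heq, hlinv]
        have : (c • v (Pi.single s 1) + d • v (Pi.single x 1)) k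
            = c * v (Pi.single s 1) k + d * v (Pi.single x 1) k := rfl
        rw [this]
        exact add_nonneg (mul_nonneg hc h1) (mul_nonneg hd h2)
      · exfalso
        have hcomp : w ∘ r s = v ∘ piw r m' := by
          funext u
          show (w ∘ r s) u = v (piw r m' u)
          rw [hpm', hwvm]
          rfl
        have hb : wlen r (w ∘ r s) ≤ wlen r v + m'.length := by
          rw [hcomp]
          exact wlen_comp_le r hvrep m'
        exact hs (by omega)

lemma mainlem (hinv : ∀ (i : Fin μ) (v : Fin μ → ℤ), r i (r i v) = v)
    (hlin : ∀ (i : Fin μ) (c d : ℤ) (x y : Fin μ → ℤ),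
      r i (c • x + d • y) = c • r i x + d • r i y)
    (hR2 : ∀ s t : Fin μ, s ≠ t → ∀ m : List (Fin μ), (∀ x ∈ m, x = s ∨ x = t) →
      (∃ c d : ℤ, 0 ≤ c ∧ 0 ≤ d ∧
        piw r m (Pi.single s 1) = c • Pi.single s 1 + d • Pi.single t 1) ∨
      (∃ m' : List (Fin μ), m'.length < m.length ∧ piw r m' = piw r m ∘ r s))
    (lam : Fin μ → ℤ) (hlampos : ∀ i, 0 ≤ lam i)
    (hstep : ∀ t : Fin μ, ∃ c : ℤ, 0 ≤ c ∧ r t lam = lam + c • Pi.single t 1) :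
    ∀ (n : ℕ) (w : (Fin μ → ℤ) → (Fin μ → ℤ)), (∃ l, piw r l = w) → wlen r w ≤ n →
      ∀ k, 0 ≤ w lam k := by
  intro n
  induction n with
  | zero =>
    intro w hw h0 k
    rw [eq_id_of_wlen_eq_zero r hw (Nat.le_zero.mp h0)]
    exact hlampos k
  | succ n ih =>
    intro w hw hn k
    by_cases h0 : wlen r w = 0
    · rw [eq_id_of_wlen_eq_zero r hw h0]
      exact hlampos k
    · obtain ⟨l, hl, hlw⟩ := wlen_spec r hw
      have hlne : l ≠ [] := by
        intro h
        rw [h] at hl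
        simp at hl
        omega
      obtain ⟨l₀, x, hlx⟩ := (List.eq_nil_or_concat l).resolve_left hlne
      rw [List.concat_eq_append] at hlx
      have hcan : piw r l₀ = w ∘ r x := by
        rw [← hlw, hlx]
        exact (piw_concat_cancel r hinv l₀ x).symm
      have hwlen' : wlen r (w ∘ r x) ≤ n := by
        have h1 : wlen r (w ∘ r x) ≤ l₀.length := wlen_le r l₀ hcan
        have h2 : l₀.length + 1 = wlen r w := by
          rw [← hl, hlx]; simp
        omega
      have hwid : w = (w ∘ r x) ∘ r x := by
        funext u
        show w u = w (r x (r x u))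
        rw [hinv]
      obtain ⟨c, hc, hrt⟩ := hstep x
      have hlt : wlen r (w ∘ r x) < wlen r w := by
        have h1 : wlen r (w ∘ r x) ≤ l₀.length := wlen_le r l₀ hcan
        have h2 : l₀.length + 1 = wlen r w := by
          rw [← hl, hlx]; simp
        omega
      have hfund : ∀ k, 0 ≤ (w ∘ r x) (Pi.single x 1) k := by
        apply fund r hinv hlin hR2 n (w ∘ r x) ⟨l₀, hcan⟩ hwlen' x
        intro hcon
        rw [← hwid] at hcon
        omega
      have hW : w lam = (w ∘ r x) (lam + c • Pi.single x 1) := by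
        conv_lhs => rw [hwid]
        show (w ∘ r x) (r x lam) = _
        rw [hrt]
      have hlin' : (w ∘ r x) (lam + c • Pi.single x 1)
          = (w ∘ r x) lam + c • (w ∘ r x) (Pi.single x 1) := by
        obtain ⟨lv, hlv⟩ : ∃ lv, piw r lv = w ∘ r x := ⟨l₀, hcan⟩
        rw [← hlv]
        have := piwlin r hlin lv 1 c lam (Pi.single x 1)
        simpa using this
      rw [hW, hlin']
      have h1 : 0 ≤ (w ∘ r x) lam k := ih (w ∘ r x) ⟨l₀, hcan⟩ hwlen' k
      have : ((w ∘ r x) lam + c • (w ∘ r x) (Pi.single x 1)) k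
          = (w ∘ r x) lam k + c * (w ∘ r x) (Pi.single x 1) k := rfl
      rw [this]
      exact add_nonneg h1 (mul_nonneg hc (hfund k))

end Stmt9Aux

open Stmt9Aux in


/-- For a symmetric generalized Cartan matrix `A` of a connected graph, with
root lattice `L = ℤ^μ`, bilinear form `I(x,y) = Σ x_i A_{ij} y_j`, simple reflections
`r_i(λ) = λ - I(λ, α_i)·α_i`, and
`K = {λ ∈ L⁺ ∖ {0} : connected support, I(λ, α_i) ≤ 0 ∀i}`:
every element of the Weyl group orbit `W(K)` (i.e. any iterated application of simple
reflections to `λ ∈ K`) lies in `L⁺ = Σ ℤ≥0 α_i`. -/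
theorem stmt9 (μ : ℕ) (A : Matrix (Fin μ) (Fin μ) ℤ)
    (hsymm : ∀ i j, A i j = A j i) (hdiag : ∀ i, A i i = 2)
    (hoff : ∀ i j, i ≠ j → A i j ≤ 0)
    (G : SimpleGraph (Fin μ))
    (hG : ∀ i j, G.Adj i j ↔ i ≠ j ∧ A i j < 0)
    (hconn : G.Connected)
    (I : (Fin μ → ℤ) → (Fin μ → ℤ) → ℤ)
    (hI : ∀ x y, I x y = ∑ i, ∑ j, x i * A i j * y j)
    (r : Fin μ → (Fin μ → ℤ) → (Fin μ → ℤ))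
    (hr : ∀ i lam, r i lam = lam - I lam (Pi.single i 1) • Pi.single i 1)
    (lam : Fin μ → ℤ) (hlam0 : lam ≠ 0) (hlampos : ∀ i, 0 ≤ lam i)
    (hsuppconn : (SimpleGraph.induce {i : Fin μ | lam i ≠ 0} G).Connected)
    (hK : ∀ i, I lam (Pi.single i 1) ≤ 0) :
    ∀ l : List (Fin μ), ∀ i, 0 ≤ (l.foldr r lam) i := by
  -- basic computation lemmas for I
  have hIe : ∀ (v : Fin μ → ℤ) (j : Fin μ), I v (Pi.single j 1) = ∑ k, v k * A k j := by
    intro v j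
    rw [hI]
    apply Finset.sum_congr rfl
    intro k _
    simp [Pi.single_apply, mul_ite, Finset.sum_ite_eq']
  have hIee : ∀ j i : Fin μ, I (Pi.single j 1) (Pi.single i 1) = A j i := by
    intro j i
    rw [hIe]
    simp [Pi.single_apply, ite_mul, Finset.sum_ite_eq']
  have hIadd : ∀ (c d : ℤ) (x y w : Fin μ → ℤ),
      I (c • x + d • y) w = c * I x w + d * I y w := by
    intro c d x y w
    simp only [hI, Finset.mul_sum]
    rw [← Finset.sum_add_distrib]
    apply Finset.sum_congr rfl
    intro k _
    rw [← Finset.sum_add_distrib]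
    apply Finset.sum_congr rfl
    intro j _
    simp only [Pi.add_apply, Pi.smul_apply, smul_eq_mul]
    ring
  have hIsub : ∀ (x : Fin μ → ℤ) (c : ℤ) (j : Fin μ) (w : Fin μ → ℤ),
      I (x - c • Pi.single j 1) w = I x w - c * I (Pi.single j 1) w := by
    intro x c j w
    simp only [hI, Finset.mul_sum]
    rw [← Finset.sum_sub_distrib]
    apply Finset.sum_congr rfl
    intro k _
    rw [← Finset.sum_sub_distrib]
    apply Finset.sum_congr rfl
    intro j' _
    simp only [Pi.sub_apply, Pi.smul_apply, smul_eq_mul]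
    ring
  -- involution
  have hinv : ∀ (i : Fin μ) (v : Fin μ → ℤ), r i (r i v) = v := by
    intro i v
    rw [hr, hr, hIsub, hIee, hdiag]
    funext x
    simp only [Pi.sub_apply, Pi.smul_apply, smul_eq_mul]
    ring
  -- linearity
  have hlin : ∀ (i : Fin μ) (c d : ℤ) (x y : Fin μ → ℤ),
      r i (c • x + d • y) = c • r i x + d • r i y := by
    intro i c d x y
    rw [hr, hr, hr, hIadd]
    funext k
    simp only [Pi.add_apply, Pi.sub_apply, Pi.smul_apply, smul_eq_mul]
    ring
  -- the step on lam
  have hstep : ∀ t : Fin μ, ∃ c : ℤ, 0 ≤ c ∧ r t lam = lam + c • Pi.single t 1 := by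
    intro t
    refine ⟨-I lam (Pi.single t 1), by linarith [hK t], ?_⟩
    rw [hr]
    funext k
    simp only [Pi.add_apply, Pi.sub_apply, Pi.smul_apply, smul_eq_mul]
    ring
  -- the rank-two hypothesis
  have hR2 : ∀ s t : Fin μ, s ≠ t → ∀ m : List (Fin μ), (∀ x ∈ m, x = s ∨ x = t) →
      (∃ c d : ℤ, 0 ≤ c ∧ 0 ≤ d ∧
        piw r m (Pi.single s 1) = c • Pi.single s 1 + d • Pi.single t 1) ∨
      (∃ m' : List (Fin μ), m'.length < m.length ∧ piw r m' = piw r m ∘ r s) := by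
    intro s t hst m hmem
    have ha : A s t ≤ 0 := hoff s t hst
    have hats : A t s = A s t := hsymm t s
    have hrs : ∀ c d : ℤ, r s (c • Pi.single s 1 + d • Pi.single t 1)
        = (-c - A s t * d) • Pi.single s 1 + d • Pi.single t 1 := by
      intro c d
      rw [hr, hIadd, hIee, hIee, hdiag, hats]
      funext k
      simp only [Pi.add_apply, Pi.sub_apply, Pi.smul_apply, smul_eq_mul]
      ring
    have hrt : ∀ c d : ℤ, r t (c • Pi.single s 1 + d • Pi.single t 1)
        = c • Pi.single s 1 + (-d - A s t * c) • Pi.single t 1 := by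
      intro c d
      rw [hr, hIadd, hIee, hIee, hdiag]
      funext k
      simp only [Pi.add_apply, Pi.sub_apply, Pi.smul_apply, smul_eq_mul]
      ring
    have hcomm : A s t = 0 → ∀ v, r s (r t v) = r t (r s v) := by
      intro ha0 v
      rw [hr t v, hr s v, hr, hr, hIsub, hIsub, hIee, hIee, hats, ha0]
      funext k
      simp only [Pi.sub_apply, Pi.smul_apply, smul_eq_mul]
      ring
    have hbraid : A s t = -1 → ∀ v, r s (r t (r s v)) = r t (r s (r t v)) := by
      intro ha1 v
      have e1 : r s v = v - I v (Pi.single s 1) • Pi.single s 1 := hr s v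
      have f1 : r t v = v - I v (Pi.single t 1) • Pi.single t 1 := hr t v
      have e2 : r t (r s v) = v - I v (Pi.single s 1) • Pi.single s 1
          - (I v (Pi.single t 1) + I v (Pi.single s 1)) • Pi.single t 1 := by
        rw [hr t (r s v), e1]
        rw [show I (v - I v (Pi.single s 1) • Pi.single s 1) (Pi.single t 1)
            = I v (Pi.single t 1) + I v (Pi.single s 1) from by
          rw [hIsub, hIee, ha1]; ring]
      have f2 : r s (r t v) = v - I v (Pi.single t 1) • Pi.single t 1
          - (I v (Pi.single s 1) + I v (Pi.single t 1)) • Pi.single s 1 := by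
        rw [hr s (r t v), f1]
        rw [show I (v - I v (Pi.single t 1) • Pi.single t 1) (Pi.single s 1)
            = I v (Pi.single s 1) + I v (Pi.single t 1) from by
          rw [hIsub, hIee, hats, ha1]; ring]
      have e3 : r s (r t (r s v)) = v - I v (Pi.single s 1) • Pi.single s 1
          - (I v (Pi.single t 1) + I v (Pi.single s 1)) • Pi.single t 1
          - I v (Pi.single t 1) • Pi.single s 1 := by
        rw [hr s (r t (r s v)), e2]
        rw [show I (v - I v (Pi.single s 1) • Pi.single s 1
            - (I v (Pi.single t 1) + I v (Pi.single s 1)) • Pi.single t 1) (Pi.single s 1)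
            = I v (Pi.single t 1) from by
          rw [hIsub, hIsub, hIee, hIee, hdiag, hats, ha1]; ring]
      have f3 : r t (r s (r t v)) = v - I v (Pi.single t 1) • Pi.single t 1
          - (I v (Pi.single s 1) + I v (Pi.single t 1)) • Pi.single s 1
          - I v (Pi.single s 1) • Pi.single t 1 := by
        rw [hr t (r s (r t v)), f2]
        rw [show I (v - I v (Pi.single t 1) • Pi.single t 1
            - (I v (Pi.single s 1) + I v (Pi.single t 1)) • Pi.single s 1) (Pi.single t 1)
            = I v (Pi.single s 1) from by
          rw [hIsub, hIsub, hIee, hIee, hdiag, ha1]; ring]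
      rw [e3, f3]
      funext k
      simp only [Pi.sub_apply, Pi.smul_apply, smul_eq_mul]
      ring
    exact r2l r hinv s t hst (A s t) ha hrs hrt hcomm hbraid m.length m le_rfl hmem
  intro l i
  exact mainlem r hinv hlin hR2 lam hlampos hstep (wlen r (piw r l)) (piw r l) ⟨l, rfl⟩
    le_rfl i
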